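/- Asymptotics of the order-1 conformal factor near the singularity: as v → (1,0) within ℝ² \ {(1,0), (−1,0)}, the product |v − (1,0)| · f_1(v) converges to 1/4, where f_1(v) = (|e_0(v)| + |e_1(v)|) / (2 l(v)³) + (1/|e_0(v)| + 1/|e_1(v)|) / l(v), with e_0(v) = v − (1,0), e_1(v) = (−1,0) − v, and l(v) = |e_0(v)| + |e_1(v)| + 2. That is, f_1(v) = (1 + o(1)) / (4|v − (1,0)|) as v → (1,0), so that near the singularity the metric f_1(v)⟨·,·⟩ is a perturbation of a standard cone metric with tip at (1,0). -/

import Mathlib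

open Filter Topology

noncomputable section

/-- Euclidean space ℝ². -/
abbrev Vec2 := EuclideanSpace ℝ (Fin 2)

/-- The point (1,0) ∈ ℝ². -/
def p₁ : Vec2 := (WithLp.equiv 2 (Fin 2 → ℝ)).symm ![1, 0]

/-- The point (-1,0) ∈ ℝ². -/
def p₂ : Vec2 := (WithLp.equiv 2 (Fin 2 → ℝ)).symm ![-1, 0]

/-- The order-1 conformal factor
`f₁(v) = (|e₀(v)| + |e₁(v)|) / (2 l(v)³) + (1/|e₀(v)| + 1/|e₁(v)|) / l(v)` on
ℝ² \ {(1,0), (-1,0)}, where `e₀(v) = v - (1,0)`, `e₁(v) = (-1,0) - v` and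
`l(v) = |e₀(v)| + |e₁(v)| + 2`. -/
def f₁ (v : Vec2) : ℝ :=
  (‖v - p₁‖ + ‖p₂ - v‖) / (2 * (‖v - p₁‖ + ‖p₂ - v‖ + 2) ^ 3)
    + (1 / ‖v - p₁‖ + 1 / ‖p₂ - v‖) / (‖v - p₁‖ + ‖p₂ - v‖ + 2)

lemma norm_p₂_sub_p₁ : ‖p₂ - p₁‖ = 2 := by
  have : p₂ - p₁ = (WithLp.equiv 2 (Fin 2 → ℝ)).symm ![-2, 0] := by
    simp [p₁, p₂]
    ext i
    fin_cases i <;> simp [PiLp.toLp_apply]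
    norm_num
  rw [this, EuclideanSpace.norm_eq]
  rw [show (Finset.univ : Finset (Fin 2)) = {0, 1} from rfl]
  norm_num [PiLp.toLp_apply]

/-- The continuous comparison function. -/
def h₁ (v : Vec2) : ℝ :=
  ‖v - p₁‖ * ((‖v - p₁‖ + ‖p₂ - v‖) / (2 * (‖v - p₁‖ + ‖p₂ - v‖ + 2) ^ 3))
    + (1 + ‖v - p₁‖ / ‖p₂ - v‖) / (‖v - p₁‖ + ‖p₂ - v‖ + 2)

lemma h₁_continuousAt : ContinuousAt h₁ p₁ := by
  have hr : ContinuousAt (fun v : Vec2 => ‖v - p₁‖) p₁ :=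
    ((continuous_id.sub continuous_const).norm).continuousAt
  have hs : ContinuousAt (fun v : Vec2 => ‖p₂ - v‖) p₁ :=
    ((continuous_const.sub continuous_id).norm).continuousAt
  have hden : ContinuousAt (fun v : Vec2 => 2 * (‖v - p₁‖ + ‖p₂ - v‖ + 2) ^ 3) p₁ :=
    (continuousAt_const.mul (((hr.add hs).add continuousAt_const).pow 3))
  have hr0 : (fun v : Vec2 => ‖v - p₁‖) p₁ = 0 := by simp
  have hs2 : (fun v : Vec2 => ‖p₂ - v‖) p₁ = 2 := norm_p₂_sub_p₁
  refine ContinuousAt.add (ContinuousAt.mul hr (ContinuousAt.div (hr.add hs) hden ?_))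
    (ContinuousAt.div (continuousAt_const.add (ContinuousAt.div hr hs ?_))
      ((hr.add hs).add continuousAt_const) ?_)
  · simp only [hr0, hs2]; norm_num
  · simp only [hs2]; norm_num
  · simp only [hr0, hs2]; norm_num

lemma h₁_at_p₁ : h₁ p₁ = 1 / 4 := by
  simp [h₁, norm_p₂_sub_p₁]
  norm_num

theorem conformal_factor_one_asymptotics :
    Tendsto (fun v => ‖v - p₁‖ * f₁ v) (𝓝[({p₁, p₂} : Set Vec2)ᶜ] p₁) (𝓝 (1 / 4)) := by
  have H : Tendsto h₁ (𝓝[({p₁, p₂} : Set Vec2)ᶜ] p₁) (𝓝 (1 / 4)) := by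
    rw [← h₁_at_p₁]
    exact h₁_continuousAt.continuousWithinAt
  refine H.congr' ?_
  filter_upwards [self_mem_nhdsWithin] with v hv
  simp only [Set.mem_compl_iff, Set.mem_insert_iff, Set.mem_singleton_iff, not_or] at hv
  have hr : ‖v - p₁‖ ≠ 0 := by
    simp only [ne_eq, norm_eq_zero, sub_eq_zero]; exact hv.1
  have hs : ‖p₂ - v‖ ≠ 0 := by
    simp only [ne_eq, norm_eq_zero, sub_eq_zero]; exact fun e => hv.2 e.symm
  have hl : ‖v - p₁‖ + ‖p₂ - v‖ + 2 ≠ 0 := by positivity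
  simp only [h₁, f₁]
  field_simp

end
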